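/- Fix ν^* > ν_* > 0. There exists a constant C_* > 0 depending only on ν^* and ν_* such that for all ν_1, ν_2 ∈ [ν_*, ν^*], all k = (k_1,k_2,k_3) ∈ ℤ³∖{(0,0,0)} and all j ∈ {1,2,3}, the magnetogeostrophic Fourier symbols satisfy |k|² |M̂^{ν_1}_j(k) − M̂^{ν_2}_j(k)| ≤ C_* |ν_1 − ν_2|. -/

import Mathlib

open scoped BigOperators

noncomputable section

/-- Fourier coefficients of a (distributional) function on the `d`-dimensional torus
`𝕋^d = [0,2π]^d`. -/
abbrev TorusCoeffs (d : ℕ) := (Fin d → ℤ) → ℂ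

namespace ActiveScalar

variable {d : ℕ}

/-- Euclidean length of a frequency vector `k ∈ ℤ^d`. -/
def freqNorm (k : Fin d → ℤ) : ℝ := Real.sqrt (∑ i, ((k i : ℝ)) ^ 2)

/-- Zero mean over the torus. -/
def MeanZero (f : TorusCoeffs d) : Prop := f 0 = 0

/-- The function on the torus represented by the Fourier coefficients `f`. -/
def toFun (f : TorusCoeffs d) (x : Fin d → ℝ) : ℂ :=
  ∑' k : Fin d → ℤ, f k * Complex.exp (Complex.I * ∑ i, (k i : ℂ) * (x i : ℂ))

/-- Square of the `L²` norm (by Parseval, up to a fixed constant). -/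
def l2NormSq (f : TorusCoeffs d) : ℝ := ∑' k : Fin d → ℤ, ‖f k‖ ^ 2

def l2Norm (f : TorusCoeffs d) : ℝ := Real.sqrt (l2NormSq f)

/-- Square of the inhomogeneous Sobolev `H^s` norm. -/
def sobolevNormSq (s : ℝ) (f : TorusCoeffs d) : ℝ :=
  ∑' k : Fin d → ℤ, (1 + freqNorm k ^ 2) ^ s * ‖f k‖ ^ 2

def sobolevNorm (s : ℝ) (f : TorusCoeffs d) : ℝ := Real.sqrt (sobolevNormSq s f)

/-- Membership in the Sobolev space `H^s`. -/
def InHs (s : ℝ) (f : TorusCoeffs d) : Prop :=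
  Summable (fun k : Fin d → ℤ => (1 + freqNorm k ^ 2) ^ s * ‖f k‖ ^ 2)

/-- `C^∞` smoothness: membership in every Sobolev space. -/
def SmoothFn (f : TorusCoeffs d) : Prop := ∀ s : ℝ, InHs s f

/-- Square of the homogeneous norm `‖Λ^s f‖_{L²}`, `Λ = (-Δ)^{1/2}`. -/
def lambdaNormSq (s : ℝ) (f : TorusCoeffs d) : ℝ :=
  ∑' k : Fin d → ℤ, freqNorm k ^ (2 * s) * ‖f k‖ ^ 2

def lambdaNorm (s : ℝ) (f : TorusCoeffs d) : ℝ := Real.sqrt (lambdaNormSq s f)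

/-- Square of the Gevrey norm `‖Λ^r e^{τ Λ^σ} f‖_{L²}` (σ = 1/s gives Gevrey class s;
σ = 1 gives the real-analytic norm with radius of analyticity τ). -/
def gevreyNormSq (σ r τ : ℝ) (f : TorusCoeffs d) : ℝ :=
  ∑' k : Fin d → ℤ, freqNorm k ^ (2 * r) * Real.exp (2 * τ * freqNorm k ^ σ) * ‖f k‖ ^ 2

def gevreyNorm (σ r τ : ℝ) (f : TorusCoeffs d) : ℝ := Real.sqrt (gevreyNormSq σ r τ f)

/-- Membership in the Gevrey class: finiteness of `‖Λ^r e^{τ Λ^σ} f‖_{L²}`. -/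
def InGevrey (σ r τ : ℝ) (f : TorusCoeffs d) : Prop :=
  Summable (fun k : Fin d → ℤ =>
    freqNorm k ^ (2 * r) * Real.exp (2 * τ * freqNorm k ^ σ) * ‖f k‖ ^ 2)

/-- The `L^∞` norm of the function represented by `f`. -/
def linftyNorm (f : TorusCoeffs d) : ℝ := ⨆ x : Fin d → ℝ, ‖toFun f x‖

/-- Membership in `L^∞`. -/
def InLinfty (f : TorusCoeffs d) : Prop :=
  BddAbove (Set.range fun x : Fin d → ℝ => ‖toFun f x‖)

/-- Hölder seminorm `[f]_{C^α}`. -/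
def holderSeminorm (α : ℝ) (f : TorusCoeffs d) : ℝ :=
  ⨆ (x : Fin d → ℝ) (y : Fin d → ℝ) (_ : x ≠ y),
    ‖toFun f x - toFun f y‖ / dist x y ^ α

/-- Hölder norm `‖f‖_{C^α} = ‖f‖_{L^∞} + [f]_{C^α}`. -/
def holderNorm (α : ℝ) (f : TorusCoeffs d) : ℝ := linftyNorm f + holderSeminorm α f

/-- Membership in the Hölder space `C^α`. -/
def InHolder (α : ℝ) (f : TorusCoeffs d) : Prop :=
  InLinfty f ∧ ∃ C : ℝ, ∀ x y : Fin d → ℝ, x ≠ y →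
    ‖toFun f x - toFun f y‖ ≤ C * dist x y ^ α

def setAvgC (s : Set (Fin d → ℝ)) (g : (Fin d → ℝ) → ℂ) : ℂ :=
  MeasureTheory.average (MeasureTheory.volume.restrict s) g

def setAvgR (s : Set (Fin d → ℝ)) (g : (Fin d → ℝ) → ℝ) : ℝ :=
  MeasureTheory.average (MeasureTheory.volume.restrict s) g

/-- BMO seminorm: supremum over balls of the mean oscillation. -/
def bmoNorm (f : TorusCoeffs d) : ℝ :=
  ⨆ (x : Fin d → ℝ) (r : ℝ) (_ : 0 < r),
    setAvgR (Metric.ball x r) (fun y => ‖toFun f y - setAvgC (Metric.ball x r) (toFun f)‖)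

/-- The drift velocity `u_j[θ] = ∂_{x_i} T_{ij}[θ]` determined by Fourier multiplier
symbols `T i j`. -/
def velocity (T : Fin d → Fin d → (Fin d → ℤ) → ℂ) (θ : TorusCoeffs d) (j : Fin d) :
    TorusCoeffs d :=
  fun k => (∑ i : Fin d, Complex.I * (k i : ℂ) * T i j k) * θ k

/-- Fourier coefficients of the advection term `u · ∇θ`. -/
def advection (u : Fin d → TorusCoeffs d) (θ : TorusCoeffs d) : TorusCoeffs d :=
  fun k => ∑' l : Fin d → ℤ, ∑ j : Fin d, u j (k - l) * (Complex.I * (l j : ℂ)) * θ l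

/-- `θ` solves the forced active scalar equation
`∂_t θ + u·∇θ = -κ Λ^γ θ + S`, `u_j = ∂_{x_i} T_{ij}[θ]`, `θ(0) = θ₀`, for times in `I`. -/
def IsSolutionOn (T : Fin d → Fin d → (Fin d → ℤ) → ℂ) (κ γ : ℝ) (S θ₀ : TorusCoeffs d)
    (θ : ℝ → TorusCoeffs d) (I : Set ℝ) : Prop :=
  θ 0 = θ₀ ∧ ∀ k : Fin d → ℤ, ∀ t ∈ I,
    HasDerivAt (fun τ : ℝ => θ τ k)
      (-(advection (velocity T (θ t)) (θ t) k)
        - Complex.ofReal (κ * freqNorm k ^ γ) * θ t k + S k) t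

/-- Assumptions A1–A5 on the family of Fourier multiplier operators `{T^ν_{ij}}_{ν ≥ 0}`. -/
structure SymbolAssumptions (d : ℕ) (T : ℝ → Fin d → Fin d → (Fin d → ℤ) → ℂ) : Prop where
  /-- A1: `∂_{x_i} ∂_{x_j} T^ν_{ij} f = 0` (so the velocity is divergence-free). -/
  a1 : ∀ ν ≥ (0:ℝ), ∀ k : Fin d → ℤ,
    (∑ i : Fin d, ∑ j : Fin d, (k i : ℂ) * (k j : ℂ) * T ν i j k) = 0
  /-- A2: `T^ν_{ij} : L^∞ → BMO` bounded uniformly in `ν ≥ 0`. -/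
  a2 : ∃ C > (0:ℝ), ∀ ν ≥ (0:ℝ), ∀ i j : Fin d, ∀ f : TorusCoeffs d,
    bmoNorm (fun k => T ν i j k * f k) ≤ C * linftyNorm f
  /-- A3: for ν > 0 the symbols decay like `|k|^{-3}`. -/
  a3 : ∀ ν > (0:ℝ), ∃ C > (0:ℝ), ∀ i j : Fin d, ∀ k : Fin d → ℤ, k ≠ 0 →
    ‖T ν i j k‖ ≤ C * freqNorm k ^ (-3 : ℝ)
  /-- A4: the zero mode vanishes. -/
  a4 : ∀ ν ≥ (0:ℝ), ∀ i j : Fin d, T ν i j 0 = 0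
  /-- A5: symbols bounded uniformly for `ν ∈ [0,1]`. -/
  a5 : ∃ C > (0:ℝ), ∀ ν ∈ Set.Icc (0:ℝ) 1, ∀ i j : Fin d, ∀ k : Fin d → ℤ, k ≠ 0 →
    ‖T ν i j k‖ ≤ C

/-- Assumptions on the (singular, order one) operators `T^0_{ij}` at `ν = 0`:
divergence-free velocity, vanishing zero mode, symbols bounded by `C₀`. -/
structure SymbolAssumptions0 (d : ℕ) (T : Fin d → Fin d → (Fin d → ℤ) → ℂ) (C₀ : ℝ) :
    Prop where
  a1 : ∀ k : Fin d → ℤ, (∑ i : Fin d, ∑ j : Fin d, (k i : ℂ) * (k j : ℂ) * T i j k) = 0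
  a4 : ∀ i j : Fin d, T i j 0 = 0
  a5 : ∀ i j : Fin d, ∀ k : Fin d → ℤ, k ≠ 0 → ‖T i j k‖ ≤ C₀

/-- `H^1` distance between two functions. -/
def distH1 (f g : TorusCoeffs d) : ℝ := sobolevNorm 1 (f - g)

/-- `L²` distance between two functions. -/
def distL2 (f g : TorusCoeffs d) : ℝ := l2Norm (f - g)

/-- The phase space: mean-zero elements of `H^1`. -/
def PhaseH1 (d : ℕ) : Set (TorusCoeffs d) := {f | MeanZero f ∧ InHs 1 f}

/-- Boundedness in `H^1`. -/
def BoundedH1 (B : Set (TorusCoeffs d)) : Prop := ∃ R : ℝ, ∀ f ∈ B, sobolevNorm 1 f ≤ R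

/-- Boundedness in `L²`. -/
def BoundedL2 (B : Set (TorusCoeffs d)) : Prop := ∃ R : ℝ, ∀ f ∈ B, l2Norm f ≤ R

/-- `π` is the solution (semigroup) map of the active scalar equation on the `H^1`
phase space. -/
def IsSolutionMap (T : Fin d → Fin d → (Fin d → ℤ) → ℂ) (κ γ : ℝ) (S : TorusCoeffs d)
    (π : ℝ → TorusCoeffs d → TorusCoeffs d) : Prop :=
  (∀ f, π 0 f = f) ∧
  (∀ s ≥ (0:ℝ), ∀ t ≥ (0:ℝ), ∀ f ∈ PhaseH1 d, π (s + t) f = π s (π t f)) ∧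
  (∀ f ∈ PhaseH1 d, IsSolutionOn T κ γ S f (fun t => π t f) (Set.Ici 0))

/-- Sequential compactness with respect to a distance function `ρ`. -/
def SeqCompactWith (ρ : TorusCoeffs d → TorusCoeffs d → ℝ) (G : Set (TorusCoeffs d)) :
    Prop :=
  ∀ u : ℕ → TorusCoeffs d, (∀ n, u n ∈ G) →
    ∃ g ∈ G, ∃ φ : ℕ → ℕ, StrictMono φ ∧
      Filter.Tendsto (fun n => ρ (u (φ n)) g) Filter.atTop (nhds 0)

/-- Compactness in `H^1` (sequential form). -/
def SeqCompactH1 (G : Set (TorusCoeffs d)) : Prop := SeqCompactWith distH1 G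

/-- Compactness in `L²` (sequential form). -/
def SeqCompactL2 (G : Set (TorusCoeffs d)) : Prop := SeqCompactWith distL2 G

/-- `G` attracts all `H^1`-bounded subsets of the phase space, in the `H^1`
Hausdorff semidistance. -/
def AttractsH1 (π : ℝ → TorusCoeffs d → TorusCoeffs d) (G : Set (TorusCoeffs d)) : Prop :=
  ∀ B : Set (TorusCoeffs d), B ⊆ PhaseH1 d → BoundedH1 B →
    ∀ ε > (0:ℝ), ∃ t₀ : ℝ, ∀ t ≥ t₀, ∀ f ∈ B, ∃ g ∈ G, distH1 (π t f) g < ε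

/-- Global attractor in `H^1`: nonempty, compact, invariant, attracting all bounded sets. -/
def IsGlobalAttractorH1 (π : ℝ → TorusCoeffs d → TorusCoeffs d)
    (G : Set (TorusCoeffs d)) : Prop :=
  G.Nonempty ∧ G ⊆ PhaseH1 d ∧ SeqCompactH1 G ∧
    (∀ t ≥ (0:ℝ), π t '' G = G) ∧ AttractsH1 π G

/-- `B` is an absorbing set for `π` on the `H^1` phase space. -/
def IsAbsorbingH1 (π : ℝ → TorusCoeffs d → TorusCoeffs d) (B : Set (TorusCoeffs d)) :
    Prop :=
  ∀ B' : Set (TorusCoeffs d), B' ⊆ PhaseH1 d → BoundedH1 B' →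
    ∃ t₀ : ℝ, ∀ t ≥ t₀, ∀ f ∈ B', π t f ∈ B

/-- Minimal number of `ε`-balls (in `H^1`) needed to cover `G`. -/
def coverNum (G : Set (TorusCoeffs d)) (ε : ℝ) : ℕ :=
  sInf {n : ℕ | ∃ c : Finset (TorusCoeffs d), c.card = n ∧
    ∀ f ∈ G, ∃ g ∈ c, distH1 f g ≤ ε}

/-- The fractal (box-counting) dimension of `G` in `H^1` is at most `D`:
`limsup_{ε→0⁺} log N(G,ε) / (-log ε) ≤ D`. -/
def FractalDimLe (G : Set (TorusCoeffs d)) (D : ℝ) : Prop :=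
  ∀ D' > D, ∀ᶠ ε in nhdsWithin (0:ℝ) (Set.Ioi 0),
    Real.log (coverNum G ε) ≤ D' * (-Real.log ε)

/-- `G` has finite fractal dimension in `H^1`. -/
def HasFiniteFractalDim (G : Set (TorusCoeffs d)) : Prop := ∃ D : ℝ, FractalDimLe G D

/-- Continuity in time with values in `H^s`, on the time set `I`. -/
def ContinuousInHs (s : ℝ) (θ : ℝ → TorusCoeffs d) (I : Set ℝ) : Prop :=
  (∀ t ∈ I, InHs s (θ t)) ∧ ∀ t₀ ∈ I,
    Filter.Tendsto (fun t => sobolevNorm s (θ t - θ t₀)) (nhdsWithin t₀ I) (nhds 0)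

/-- `θ ∈ L²(I; H^s)`. -/
def L2InTimeHs (s : ℝ) (θ : ℝ → TorusCoeffs d) (I : Set ℝ) : Prop :=
  MeasureTheory.IntegrableOn (fun t => (sobolevNorm s (θ t)) ^ 2) I ∧
    ∀ᵐ t ∂(MeasureTheory.volume.restrict I), InHs s (θ t)

/-- (Real) `H^1` inner product, `⟨f,g⟩_{H^1}`. -/
def h1InnerR (f g : TorusCoeffs d) : ℝ :=
  ((2 * Real.pi) ^ d) *
    (∑' k : Fin d → ℤ, Complex.ofReal (1 + freqNorm k ^ 2) * (starRingEnd ℂ) (f k) * g k).re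

/-- The linearized operator `A_θ[ψ] = -κΛ^γψ - u[θ]·∇ψ - u[ψ]·∇θ`. -/
def linOp (T : Fin d → Fin d → (Fin d → ℤ) → ℂ) (κ γ : ℝ) (θ ψ : TorusCoeffs d) :
    TorusCoeffs d :=
  fun k => -Complex.ofReal (κ * freqNorm k ^ γ) * ψ k
    - advection (velocity T θ) ψ k - advection (velocity T ψ) θ k

/-- The pairing `∫_{𝕋^d} (-Δφ) A_θ[φ] dx` entering the trace `Tr(P_n A_θ)`. -/
def tracePair (T : Fin d → Fin d → (Fin d → ℤ) → ℂ) (κ γ : ℝ) (θ φ : TorusCoeffs d) : ℝ :=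
  ((2 * Real.pi) ^ d) *
    (∑' k : Fin d → ℤ, Complex.ofReal (freqNorm k ^ 2) *
      (starRingEnd ℂ) (φ k) * linOp T κ γ θ φ k).re

/-- One-sided Hausdorff semidistance `sup_{φ∈A} inf_{ψ∈B} ρ(φ,ψ)`. -/
def hausSemidist (ρ : TorusCoeffs d → TorusCoeffs d → ℝ) (A B : Set (TorusCoeffs d)) : ℝ :=
  sSup {c : ℝ | ∃ φ ∈ A, c = sInf {r : ℝ | ∃ ψ ∈ B, r = ρ φ ψ}}

/-! ### The magnetogeostrophic (MG) equation on `𝕋³` -/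

/-- `|k|²` for `k ∈ ℤ³`. -/
def mgNormSq (k : Fin 3 → ℤ) : ℝ :=
  ((k 0 : ℝ)) ^ 2 + ((k 1 : ℝ)) ^ 2 + ((k 2 : ℝ)) ^ 2

/-- Denominator `D(k) = |k|²k₃² + (k₂² + ν|k|⁴)²` of the MG symbols. -/
def mgD (ν : ℝ) (k : Fin 3 → ℤ) : ℝ :=
  mgNormSq k * ((k 2 : ℝ)) ^ 2 + (((k 1 : ℝ)) ^ 2 + ν * mgNormSq k ^ 2) ^ 2

/-- The MG Fourier multiplier symbols `M̂^ν_j(k)` (vanishing on `{k₃ = 0}`). -/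
def mgSymbol (ν : ℝ) (j : Fin 3) (k : Fin 3 → ℤ) : ℝ :=
  if k 2 = 0 then 0 else
    (if j = 0 then
        (k 1 : ℝ) * (k 2 : ℝ) * mgNormSq k -
          (k 0 : ℝ) * (k 2 : ℝ) * (((k 1 : ℝ)) ^ 2 + ν * mgNormSq k ^ 2)
      else if j = 1 then
        -((k 0 : ℝ)) * (k 2 : ℝ) * mgNormSq k -
          (k 1 : ℝ) * (k 2 : ℝ) * (((k 1 : ℝ)) ^ 2 + ν * mgNormSq k ^ 2)
      else
        (((k 0 : ℝ)) ^ 2 + ((k 1 : ℝ)) ^ 2) * (((k 1 : ℝ)) ^ 2 + ν * mgNormSq k ^ 2))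
      / mgD ν k

/-- The MG drift velocity `u_j = M^ν_j[θ]`. -/
def mgVelocity (ν : ℝ) (θ : TorusCoeffs 3) (j : Fin 3) : TorusCoeffs 3 :=
  fun k => (mgSymbol ν j k : ℂ) * θ k

/-- `θ` solves the MG equation `∂_tθ + u·∇θ = κΔθ + S`, `u = M^ν[θ]`, `θ(0) = θ₀`,
for all `t ≥ 0`. -/
def IsMGSolution (ν κ : ℝ) (S θ₀ : TorusCoeffs 3) (θ : ℝ → TorusCoeffs 3) : Prop :=
  θ 0 = θ₀ ∧ ∀ k : Fin 3 → ℤ, ∀ t ≥ (0:ℝ),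
    HasDerivAt (fun τ : ℝ => θ τ k)
      (-(advection (mgVelocity ν (θ t)) (θ t) k)
        - Complex.ofReal (κ * freqNorm k ^ 2) * θ t k + S k) t

/-- Zero vertical mean: Fourier modes with `k₃ = 0` vanish. -/
def VertZero (f : TorusCoeffs 3) : Prop := ∀ k : Fin 3 → ℤ, k 2 = 0 → f k = 0

/-- The MG `H^1` phase space. -/
def MGPhaseH1 : Set (TorusCoeffs 3) := {f | VertZero f ∧ InHs 1 f}

/-- The MG `L²` phase space. -/
def MGPhaseL2 : Set (TorusCoeffs 3) :=
  {f | VertZero f ∧ Summable (fun k : Fin 3 → ℤ => ‖f k‖ ^ 2)}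

/-- `π` is the MG solution (semigroup) map for viscosity `ν`. -/
def IsMGSolutionMap (ν κ : ℝ) (S : TorusCoeffs 3)
    (π : ℝ → TorusCoeffs 3 → TorusCoeffs 3) : Prop :=
  (∀ f, π 0 f = f) ∧
  (∀ s ≥ (0:ℝ), ∀ t ≥ (0:ℝ), ∀ f ∈ MGPhaseL2, π (s + t) f = π s (π t f)) ∧
  (∀ f ∈ MGPhaseL2, IsMGSolution ν κ S f (fun t => π t f))

def MGAttractsH1 (π : ℝ → TorusCoeffs 3 → TorusCoeffs 3) (G : Set (TorusCoeffs 3)) :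
    Prop :=
  ∀ B : Set (TorusCoeffs 3), B ⊆ MGPhaseH1 → BoundedH1 B →
    ∀ ε > (0:ℝ), ∃ t₀ : ℝ, ∀ t ≥ t₀, ∀ f ∈ B, ∃ g ∈ G, distH1 (π t f) g < ε

def MGAttractsL2 (π : ℝ → TorusCoeffs 3 → TorusCoeffs 3) (G : Set (TorusCoeffs 3)) :
    Prop :=
  ∀ B : Set (TorusCoeffs 3), B ⊆ MGPhaseL2 → BoundedL2 B →
    ∀ ε > (0:ℝ), ∃ t₀ : ℝ, ∀ t ≥ t₀, ∀ f ∈ B, ∃ g ∈ G, distL2 (π t f) g < ε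

/-- Global attractor of the MG^ν equation in `H^1`. -/
def IsMGAttractorH1 (π : ℝ → TorusCoeffs 3 → TorusCoeffs 3) (G : Set (TorusCoeffs 3)) :
    Prop :=
  G.Nonempty ∧ G ⊆ MGPhaseH1 ∧ SeqCompactH1 G ∧
    (∀ t ≥ (0:ℝ), π t '' G = G) ∧ MGAttractsH1 π G

/-- Global attractor of the MG⁰ equation in `L²`. -/
def IsMGAttractorL2 (π : ℝ → TorusCoeffs 3 → TorusCoeffs 3) (G : Set (TorusCoeffs 3)) :
    Prop :=
  G.Nonempty ∧ G ⊆ MGPhaseL2 ∧ SeqCompactL2 G ∧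
    (∀ t ≥ (0:ℝ), π t '' G = G) ∧ MGAttractsL2 π G

end ActiveScalar
namespace ActiveScalar


set_option maxHeartbeats 1000000 in
lemma mg_key (νs νb n S P A B ν₁ ν₂ : ℝ)
    (hνs : 0 < νs) (hνb : νs < νb)
    (h1 : ν₁ ∈ Set.Icc νs νb) (h2 : ν₂ ∈ Set.Icc νs νb)
    (hn : 1 ≤ n) (hS0 : 0 ≤ S) (hS : S ≤ n^2)
    (hP0 : 0 ≤ P) (hP : P ≤ n)
    (hA : |A| ≤ 2*n^2) (hB : |B| ≤ n^3) :
    n * |(A+ν₁*B)/(S+(P+ν₁*n^2)^2) - (A+ν₂*B)/(S+(P+ν₂*n^2)^2)|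
      ≤ ((1+(1+νb)^2) + (2+νb)*(2+2*νb))/νs^4 * |ν₁-ν₂| := by
  obtain ⟨h1a, h1b⟩ := h1
  obtain ⟨h2a, h2b⟩ := h2
  have hn0 : (0:ℝ) < n := lt_of_lt_of_le one_pos hn
  have hν1 : 0 < ν₁ := lt_of_lt_of_le hνs h1a
  have hν2 : 0 < ν₂ := lt_of_lt_of_le hνs h2a
  have hνb0 : 0 < νb := hνs.trans hνb
  set K : ℝ := (1+(1+νb)^2) + (2+νb)*(2+2*νb) with hK
  have hKpos : 0 < K := by positivity
  set D₁ : ℝ := S+(P+ν₁*n^2)^2 with hD₁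
  set D₂ : ℝ := S+(P+ν₂*n^2)^2 with hD₂
  have hD1lb : νs^2*n^4 ≤ D₁ := by nlinarith [sq_nonneg P, mul_nonneg hP0 (mul_nonneg hν1.le (sq_nonneg n)), pow_le_pow_left₀ hνs.le h1a 2, pow_pos hn0 4]
  have hD2lb : νs^2*n^4 ≤ D₂ := by nlinarith [sq_nonneg P, mul_nonneg hP0 (mul_nonneg hν2.le (sq_nonneg n)), pow_le_pow_left₀ hνs.le h2a 2, pow_pos hn0 4]
  have hD1pos : 0 < D₁ := lt_of_lt_of_le (by positivity) hD1lb
  have hD2pos : 0 < D₂ := lt_of_lt_of_le (by positivity) hD2lb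
  rw [div_sub_div _ _ hD1pos.ne' hD2pos.ne', abs_div, abs_of_pos (mul_pos hD1pos hD2pos)]
  set F : ℝ := B*D₂ - (A+ν₂*B)*(n^2*(2*P+(ν₁+ν₂)*n^2)) with hF
  have hE : (A+ν₁*B)*D₂ - D₁*(A+ν₂*B) = (ν₁-ν₂)*F := by
    rw [hF, hD₁, hD₂]; ring
  rw [hE, abs_mul]
  rw [mul_div_assoc'] ; rw [div_le_iff₀ (mul_pos hD1pos hD2pos)]
  -- key bound : n * |F| ≤ K/νs^4 * (D₁*D₂)
  have hABν : |A + ν₂*B| ≤ (2+νb)*n^3 := by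
    calc |A + ν₂*B| ≤ |A| + |ν₂*B| := abs_add_le _ _
      _ = |A| + ν₂*|B| := by rw [abs_mul, abs_of_pos hν2]
      _ ≤ 2*n^2 + νb*n^3 := by
          have : ν₂*|B| ≤ νb*n^3 :=
            mul_le_mul h2b hB (abs_nonneg _) hνb0.le
          linarith
      _ ≤ (2+νb)*n^3 := by nlinarith
  have hn2 : 1 ≤ n^2 := by nlinarith
  have hn24 : n^2 ≤ n^4 := by nlinarith [mul_nonneg (sq_nonneg n) (sub_nonneg.mpr hn2)]
  have hD2ub : D₂ ≤ (1+(1+νb)^2)*n^4 := by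
    have h5 : P + ν₂*n^2 ≤ (1+νb)*n^2 := by nlinarith
    have h6 : (P+ν₂*n^2)*(P+ν₂*n^2) ≤ ((1+νb)*n^2)*((1+νb)*n^2) :=
      mul_self_le_mul_self (by positivity) h5
    nlinarith [h6, hS, hn24]
  have hterm2 : n^2*(2*P+(ν₁+ν₂)*n^2) ≤ (2+2*νb)*n^4 := by
    nlinarith [mul_le_mul_of_nonneg_right hP (sq_nonneg n), pow_pos hn0 3, pow_pos hn0 4,
      mul_le_mul_of_nonneg_right (add_le_add h1b h2b) (pow_nonneg hn0.le 4),
      mul_le_mul_of_nonneg_left hn (pow_nonneg hn0.le 3)]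
  have hterm2nn : 0 ≤ n^2*(2*P+(ν₁+ν₂)*n^2) := by positivity
  have hFb : |F| ≤ K*n^7 := by
    calc |F| ≤ |B*D₂| + |(A+ν₂*B)*(n^2*(2*P+(ν₁+ν₂)*n^2))| := abs_sub _ _
      _ = (|B|)*D₂ + (|A+ν₂*B|)*(n^2*(2*P+(ν₁+ν₂)*n^2)) := by
          rw [abs_mul, abs_mul, abs_of_pos hD2pos, abs_of_nonneg hterm2nn]
      _ ≤ n^3*((1+(1+νb)^2)*n^4) + ((2+νb)*n^3)*((2+2*νb)*n^4) := by
          have g1 : (|B|)*D₂ ≤ n^3*((1+(1+νb)^2)*n^4) :=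
            mul_le_mul hB hD2ub hD2pos.le (by positivity)
          have g2 : (|A+ν₂*B|)*(n^2*(2*P+(ν₁+ν₂)*n^2)) ≤ ((2+νb)*n^3)*((2+2*νb)*n^4) :=
            mul_le_mul hABν hterm2 hterm2nn (by positivity)
          linarith
      _ = K*n^7 := by rw [hK]; ring
  have hD12 : νs^4*n^8 ≤ D₁*D₂ := by
    calc νs^4*n^8 = (νs^2*n^4)*(νs^2*n^4) := by ring
      _ ≤ D₁*D₂ := mul_le_mul hD1lb hD2lb (by positivity) hD1pos.le
  have hkey : n*(|F|) ≤ K/νs^4*(D₁*D₂) := by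
    calc n*(|F|) ≤ n*(K*n^7) := by
          exact mul_le_mul_of_nonneg_left hFb hn0.le
      _ = K/νs^4*(νs^4*n^8) := by field_simp
      _ ≤ K/νs^4*(D₁*D₂) := by
          apply mul_le_mul_of_nonneg_left hD12 (by positivity)
  calc n*((|ν₁-ν₂|)*(|F|)) = (|ν₁-ν₂|)*(n*(|F|)) := by ring
    _ ≤ (|ν₁-ν₂|)*(K/νs^4*(D₁*D₂)) := mul_le_mul_of_nonneg_left hkey (abs_nonneg _)
    _ = K/νs^4*(|ν₁-ν₂|)*(D₁*D₂) := by ring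


set_option maxHeartbeats 1000000 in
/-- Lemma: Lipschitz estimate in `ν` for the MG Fourier symbols.
Fix `ν^* > ν_* > 0`.  There is `C_* > 0` depending only on `ν^*, ν_*` such that for all
`ν₁, ν₂ ∈ [ν_*, ν^*]`, all `k ∈ ℤ³∖{0}` and all `j ∈ {1,2,3}`:
`|k|² |M̂^{ν₁}_j(k) − M̂^{ν₂}_j(k)| ≤ C_* |ν₁ − ν₂|`. -/
theorem mg_symbol_lipschitz
    (νs νb : ℝ) (hνs : 0 < νs) (hν : νs < νb) :
    ∃ C > (0:ℝ), ∀ ν₁ ∈ Set.Icc νs νb, ∀ ν₂ ∈ Set.Icc νs νb,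
      ∀ k : Fin 3 → ℤ, k ≠ 0 → ∀ j : Fin 3,
        mgNormSq k * |mgSymbol ν₁ j k - mgSymbol ν₂ j k| ≤ C * |ν₁ - ν₂| := by
  have hνb0 : 0 < νb := hνs.trans hν
  refine ⟨((1+(1+νb)^2) + (2+νb)*(2+2*νb))/νs^4, by positivity, ?_⟩
  intro ν₁ h1 ν₂ h2 k hk j
  by_cases hk2 : k 2 = 0
  · have hz : ∀ ν : ℝ, mgSymbol ν j k = 0 := fun ν => by rw [mgSymbol, if_pos hk2]
    rw [hz ν₁, hz ν₂, sub_zero, abs_zero, mul_zero]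
    positivity
  · have hc : (1:ℝ) ≤ ((k 2 : ℝ))^2 := by
      have h1 : (1:ℤ) ≤ (k 2)^2 := by rcases lt_or_gt_of_ne hk2 with h|h <;> nlinarith
      exact_mod_cast h1
    have hna : mgNormSq k = ((k 0:ℝ))^2 + ((k 1:ℝ))^2 + ((k 2:ℝ))^2 := rfl
    have hn1 : 1 ≤ mgNormSq k := by rw [hna]; nlinarith [sq_nonneg ((k 0:ℝ)), sq_nonneg ((k 1:ℝ))]
    have hn0 : 0 < mgNormSq k := lt_of_lt_of_le one_pos hn1
    have ha2 : ((k 0:ℝ))^2 ≤ mgNormSq k := by rw [hna]; nlinarith [sq_nonneg ((k 1:ℝ)), sq_nonneg ((k 2:ℝ))]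
    have hb2 : ((k 1:ℝ))^2 ≤ mgNormSq k := by rw [hna]; nlinarith [sq_nonneg ((k 0:ℝ)), sq_nonneg ((k 2:ℝ))]
    have hc2 : ((k 2:ℝ))^2 ≤ mgNormSq k := by rw [hna]; nlinarith [sq_nonneg ((k 0:ℝ)), sq_nonneg ((k 1:ℝ))]
    have hbc : |(k 1:ℝ)*(k 2:ℝ)| ≤ mgNormSq k := by
      rw [abs_le, hna]
      constructor <;> nlinarith [sq_nonneg ((k 1:ℝ)+(k 2:ℝ)), sq_nonneg ((k 1:ℝ)-(k 2:ℝ)), sq_nonneg ((k 0:ℝ))]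
    have hac : |(k 0:ℝ)*(k 2:ℝ)| ≤ mgNormSq k := by
      rw [abs_le, hna]
      constructor <;> nlinarith [sq_nonneg ((k 0:ℝ)+(k 2:ℝ)), sq_nonneg ((k 0:ℝ)-(k 2:ℝ)), sq_nonneg ((k 1:ℝ))]
    obtain ⟨hbc1, hbc2⟩ := abs_le.mp hbc
    obtain ⟨hac1, hac2⟩ := abs_le.mp hac
    have hS0 : 0 ≤ mgNormSq k * ((k 2:ℝ))^2 := by positivity
    have hS : mgNormSq k * ((k 2:ℝ))^2 ≤ (mgNormSq k)^2 := by nlinarith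
    have hP0 : 0 ≤ ((k 1:ℝ))^2 := sq_nonneg _
    fin_cases j
    · show mgNormSq k * |mgSymbol ν₁ 0 k - mgSymbol ν₂ 0 k| ≤
          ((1+(1+νb)^2) + (2+νb)*(2+2*νb))/νs^4 * |ν₁ - ν₂|
      have e : ∀ ν : ℝ, mgSymbol ν 0 k =
          (((k 1:ℝ)*(k 2:ℝ)*mgNormSq k - (k 0:ℝ)*(k 2:ℝ)*((k 1:ℝ))^2)
            + ν*(-((k 0:ℝ)*(k 2:ℝ))*(mgNormSq k)^2))
          /(mgNormSq k*((k 2:ℝ))^2 + (((k 1:ℝ))^2+ν*(mgNormSq k)^2)^2) := by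
        intro ν
        rw [mgSymbol, if_neg hk2, mgD, if_pos (show (0:Fin 3)=0 from rfl)]
        ring
      rw [e ν₁, e ν₂]
      refine mg_key νs νb (mgNormSq k) _ _ _ _ ν₁ ν₂ hνs hν h1 h2 hn1 hS0 hS hP0 hb2 ?_ ?_
      · rw [abs_le]
        constructor <;>
          nlinarith [mul_le_mul_of_nonneg_right hbc2 hn0.le, mul_le_mul_of_nonneg_right hbc1 hn0.le,
            mul_le_mul_of_nonneg_right hac2 hP0, mul_le_mul_of_nonneg_right hac1 hP0, hb2, hn0]
      · rw [abs_le]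
        constructor <;>
          nlinarith [mul_le_mul_of_nonneg_right hac2 (sq_nonneg (mgNormSq k)),
            mul_le_mul_of_nonneg_right hac1 (sq_nonneg (mgNormSq k)),
            mul_le_mul_of_nonneg_left hn1 (mul_pos hn0 hn0).le]
    · show mgNormSq k * |mgSymbol ν₁ 1 k - mgSymbol ν₂ 1 k| ≤
          ((1+(1+νb)^2) + (2+νb)*(2+2*νb))/νs^4 * |ν₁ - ν₂|
      have e : ∀ ν : ℝ, mgSymbol ν 1 k =
          ((-((k 0:ℝ))*(k 2:ℝ)*mgNormSq k - (k 1:ℝ)*(k 2:ℝ)*((k 1:ℝ))^2)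
            + ν*(-((k 1:ℝ)*(k 2:ℝ))*(mgNormSq k)^2))
          /(mgNormSq k*((k 2:ℝ))^2 + (((k 1:ℝ))^2+ν*(mgNormSq k)^2)^2) := by
        intro ν
        rw [mgSymbol, if_neg hk2, mgD, if_neg (show ¬(1:Fin 3)=0 by decide),
          if_pos (show (1:Fin 3)=1 from rfl)]
        ring
      rw [e ν₁, e ν₂]
      refine mg_key νs νb (mgNormSq k) _ _ _ _ ν₁ ν₂ hνs hν h1 h2 hn1 hS0 hS hP0 hb2 ?_ ?_
      · rw [abs_le]
        constructor <;>
          nlinarith [mul_le_mul_of_nonneg_right hac2 hn0.le, mul_le_mul_of_nonneg_right hac1 hn0.le,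
            mul_le_mul_of_nonneg_right hbc2 hP0, mul_le_mul_of_nonneg_right hbc1 hP0, hb2, hn0]
      · rw [abs_le]
        constructor <;>
          nlinarith [mul_le_mul_of_nonneg_right hbc2 (sq_nonneg (mgNormSq k)),
            mul_le_mul_of_nonneg_right hbc1 (sq_nonneg (mgNormSq k)),
            mul_le_mul_of_nonneg_left hn1 (mul_pos hn0 hn0).le]
    · show mgNormSq k * |mgSymbol ν₁ 2 k - mgSymbol ν₂ 2 k| ≤
          ((1+(1+νb)^2) + (2+νb)*(2+2*νb))/νs^4 * |ν₁ - ν₂|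
      have e : ∀ ν : ℝ, mgSymbol ν 2 k =
          (((((k 0:ℝ))^2+((k 1:ℝ))^2)*((k 1:ℝ))^2)
            + ν*((((k 0:ℝ))^2+((k 1:ℝ))^2)*(mgNormSq k)^2))
          /(mgNormSq k*((k 2:ℝ))^2 + (((k 1:ℝ))^2+ν*(mgNormSq k)^2)^2) := by
        intro ν
        rw [mgSymbol, if_neg hk2, mgD, if_neg (show ¬(2:Fin 3)=0 by decide),
          if_neg (show ¬(2:Fin 3)=1 by decide)]
        ring
      rw [e ν₁, e ν₂]
      have hab2 : ((k 0:ℝ))^2+((k 1:ℝ))^2 ≤ mgNormSq k := by rw [hna]; nlinarith [sq_nonneg ((k 2:ℝ))]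
      have hab0 : 0 ≤ ((k 0:ℝ))^2+((k 1:ℝ))^2 := by positivity
      refine mg_key νs νb (mgNormSq k) _ _ _ _ ν₁ ν₂ hνs hν h1 h2 hn1 hS0 hS hP0 hb2 ?_ ?_
      · rw [abs_le]
        constructor <;>
          nlinarith [mul_le_mul hab2 hb2 hP0 hn0.le, mul_nonneg hab0 hP0, hn0]
      · rw [abs_le]
        constructor <;>
          nlinarith [mul_le_mul_of_nonneg_right hab2 (sq_nonneg (mgNormSq k)),
            mul_nonneg hab0 (sq_nonneg (mgNormSq k)),
            mul_le_mul_of_nonneg_left hn1 (mul_pos hn0 hn0).le]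


end ActiveScalar
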